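/- Let M = (E, r) be a finite matroid satisfying condition R(k,m): for any two flats F ⊆ A with r(A) ≥ m, |A \ F| ≥ k·(r(A) − r(F)). Let A₁,…,A_k be flats of M with r(A_i) ≥ m for every i ∈ [k]. Then there exist pairwise disjoint subsets B_i ⊆ A_i such that each B_i is a basis of A_i (an independent set of size r(A_i)). -/

import Mathlib

/-- The rank of a set `X` in a matroid `M`: the largest cardinality of an independent
subset of `X`. -/
noncomputable def mrk {α : Type*} (M : Matroid α) (X : Set α) : ℕ :=
  sSup (Set.ncard '' {I | M.Indep I ∧ I ⊆ X})

open Set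

namespace StmtAux

variable {α : Type*} {M : Matroid α}

lemma flat_closure (M : Matroid α) (X : Set α) : M.IsFlat (M.closure X) :=
  ⟨fun I X' hI hX' => hX'.subset_closure.trans
    (by rw [hI.closure_eq_closure]; exact (M.closure_closure X).subset),
   M.closure_subset_ground X⟩

lemma flat_inter {F F' : Set α} (hF : M.IsFlat F) (hF' : M.IsFlat F') : M.IsFlat (F ∩ F') := by
  rw [inter_eq_iInter]
  exact Matroid.IsFlat.iInter (fun b => by cases b <;> simpa)

lemma indep_finite [M.Finite] {I : Set α} (hI : M.Indep I) : I.Finite :=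
  M.set_finite I hI.subset_ground

lemma card_le_of_subset_closure [M.Finite] {J B : Set α} (hJ : M.Indep J) (hB : M.Indep B)
    (h : J ⊆ M.closure B) : J.ncard ≤ B.ncard := by
  obtain ⟨J', hJ', hsub⟩ := hJ.subset_isBasis_of_subset h (M.closure_subset_ground B)
  have hcard := hJ'.encard_eq_encard hB.isBasis_closure
  calc J.ncard ≤ J'.ncard := ncard_le_ncard hsub (indep_finite hJ'.indep)
    _ = B.ncard := by rw [Set.ncard, Set.ncard, hcard]

lemma bddAbove_mrk [M.Finite] (X : Set α) : BddAbove (Set.ncard '' {I | M.Indep I ∧ I ⊆ X}) := by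
  refine ⟨M.E.ncard, ?_⟩
  rintro n ⟨J, ⟨hJi, _⟩, rfl⟩
  exact ncard_le_ncard hJi.subset_ground M.ground_finite

lemma nonempty_mrk (X : Set α) : (Set.ncard '' {I | M.Indep I ∧ I ⊆ X}).Nonempty :=
  ⟨(∅ : Set α).ncard, ⟨∅, ⟨M.empty_indep, empty_subset X⟩, rfl⟩⟩

lemma ncard_le_mrk [M.Finite] {I X : Set α} (hI : M.Indep I) (hIX : I ⊆ X) :
    I.ncard ≤ mrk M X :=
  le_csSup (bddAbove_mrk X) ⟨I, ⟨hI, hIX⟩, rfl⟩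

lemma mrk_le_ncard_of_subset_closure [M.Finite] {B X : Set α} (hB : M.Indep B)
    (hX : X ⊆ M.closure B) : mrk M X ≤ B.ncard := by
  refine csSup_le (nonempty_mrk X) ?_
  rintro n ⟨J, ⟨hJi, hJX⟩, rfl⟩
  exact card_le_of_subset_closure hJi hB (hJX.trans hX)

lemma basis_ncard [M.Finite] {B X : Set α} (hB : M.IsBasis B X) : mrk M X = B.ncard :=
  le_antisymm (mrk_le_ncard_of_subset_closure hB.indep hB.subset_closure)
    (ncard_le_mrk hB.indep hB.subset)

lemma mrk_mono [M.Finite] {X Y : Set α} (h : X ⊆ Y) : mrk M X ≤ mrk M Y := by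
  refine csSup_le (nonempty_mrk X) ?_
  rintro n ⟨J, ⟨hJi, hJX⟩, rfl⟩
  exact ncard_le_mrk hJi (hJX.trans h)

lemma basis_of_mrk_le [M.Finite] {I X : Set α} (hI : M.Indep I) (hIX : I ⊆ X)
    (hX : X ⊆ M.E) (h : mrk M X ≤ I.ncard) : M.IsBasis I X := by
  obtain ⟨J, hJ, hIJ⟩ := hI.subset_isBasis_of_subset hIX hX
  have hJI : J.ncard ≤ I.ncard := le_trans (basis_ncard hJ).symm.le h
  have : I = J := eq_of_subset_of_ncard_le hIJ hJI (indep_finite hJ.indep)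
  rwa [this]

/-- Two-removal lemma: if `x` is spanned by `I - y₁` and by `I - y₂`, it is spanned by
`I - y₁ - y₂`. -/
lemma mem_closure_diff_pair [M.Finite] {I : Set α} {x y₁ y₂ : α} (hI : M.Indep I)
    (hy₁ : y₁ ∈ I) (hy₂ : y₂ ∈ I)
    (h1 : x ∈ M.closure (I \ {y₁})) (h2 : x ∈ M.closure (I \ {y₂})) :
    x ∈ M.closure (I \ {y₁, y₂}) := by
  have hxE : x ∈ M.E := Matroid.mem_ground_of_mem_closure h1
  by_cases hne : y₁ = y₂
  · subst hne; simpa [Set.pair_eq_singleton] using h1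
  by_cases hxI : x ∈ I
  · have hx1 : x ≠ y₁ := by rintro rfl; exact hI.notMem_closure_diff_of_mem hxI h1
    have hx2 : x ≠ y₂ := by rintro rfl; exact hI.notMem_closure_diff_of_mem hxI h2
    exact M.mem_closure_of_mem ⟨hxI, by simp [hx1, hx2]⟩
      (diff_subset.trans hI.subset_ground)
  by_contra hxJ
  set J := I \ {y₁, y₂} with hJdef
  have hJI : M.Indep J := hI.subset diff_subset
  have e1 : I \ {y₂} = insert y₁ J := by
    ext z; simp only [hJdef, mem_diff, mem_insert_iff, mem_singleton_iff]
    constructor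
    · rintro ⟨hz, hz2⟩
      by_cases hz1 : z = y₁
      · exact Or.inl hz1
      · exact Or.inr ⟨hz, by simp [hz1, hz2]⟩
    · rintro (rfl | ⟨hz, hz'⟩)
      · exact ⟨hy₁, hne⟩
      · exact ⟨hz, fun h => hz' (Or.inr h)⟩
  have e2 : I \ {y₁} = insert y₂ J := by
    ext z; simp only [hJdef, mem_diff, mem_insert_iff, mem_singleton_iff]
    constructor
    · rintro ⟨hz, hz1⟩
      by_cases hz2 : z = y₂
      · exact Or.inl hz2
      · exact Or.inr ⟨hz, by simp [hz1, hz2]⟩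
    · rintro (rfl | ⟨hz, hz'⟩)
      · exact ⟨hy₂, Ne.symm hne⟩
      · exact ⟨hz, fun h => hz' (Or.inl h)⟩
  have hy1cl : y₁ ∈ M.closure (insert x J) := Matroid.mem_closure_insert hxJ (e1 ▸ h2)
  have hy2cl : y₂ ∈ M.closure (insert x J) := Matroid.mem_closure_insert hxJ (e2 ▸ h1)
  have hxnJ : x ∉ J := fun h => hxI h.1
  have hxJi : M.Indep (insert x J) := by
    rw [hJI.insert_indep_iff_of_notMem hxnJ]
    exact ⟨hxE, hxJ⟩
  have hIsub : I ⊆ M.closure (insert x J) := by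
    intro z hz
    by_cases hz1 : z = y₁
    · exact hz1 ▸ hy1cl
    by_cases hz2 : z = y₂
    · exact hz2 ▸ hy2cl
    exact M.mem_closure_of_mem (Or.inr ⟨hz, by simp [hz1, hz2]⟩) hxJi.subset_ground
  have hcard := card_le_of_subset_closure hI hxJi hIsub
  have hIfin : I.Finite := indep_finite hI
  have hpair : ({y₁, y₂} : Set α) ⊆ I := by
    rintro z (rfl | rfl)
    · exact hy₁
    · exact hy₂
  have hJ2 : J.ncard + 2 = I.ncard := by
    have := ncard_diff_add_ncard_of_subset hpair hIfin
    rwa [ncard_pair hne] at this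
  have hins : (insert x J).ncard ≤ J.ncard + 1 := ncard_insert_le x J
  omega

/-- Multi-removal: if `x ∈ cl I` and `x ∈ cl (I - y)` for every `y ∈ B`, then
`x ∈ cl (I \ B)`. -/
lemma mem_closure_diff_set [M.Finite] :
    ∀ (n : ℕ) (I B : Set α), M.Indep I → B ⊆ I → B.ncard = n →
      (x ∈ M.closure I) → (∀ y ∈ B, x ∈ M.closure (I \ {y})) → x ∈ M.closure (I \ B) := by
  intro n
  induction n with
  | zero =>
    intro I B hI hBI hB0 hx _
    have hBfin : B.Finite := (indep_finite hI).subset hBI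
    rw [(ncard_eq_zero hBfin).mp hB0, diff_empty]
    exact hx
  | succ n ih =>
    intro I B hI hBI hBcard hx h
    have hBfin : B.Finite := (indep_finite hI).subset hBI
    obtain ⟨y₀, hy₀⟩ : B.Nonempty := by
      rw [← ncard_pos hBfin]; omega
    have hI' : M.Indep (I \ {y₀}) := hI.subset diff_subset
    have hB' : B \ {y₀} ⊆ I \ {y₀} := diff_subset_diff_left hBI
    have hcard' : (B \ {y₀}).ncard = n := by
      rw [ncard_diff_singleton_of_mem hy₀, hBcard]; rfl
    have hx' : x ∈ M.closure (I \ {y₀}) := h y₀ hy₀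
    have h' : ∀ y ∈ B \ {y₀}, x ∈ M.closure ((I \ {y₀}) \ {y}) := by
      intro y hy
      have : (I \ {y₀}) \ {y} = I \ {y₀, y} := by
        ext z; simp only [mem_diff, mem_singleton_iff, mem_insert_iff]; tauto
      rw [this]
      exact mem_closure_diff_pair hI (hBI hy₀) (hBI hy.1) hx' (h y hy.1)
    have := ih (I \ {y₀}) (B \ {y₀}) hI' hB' hcard' hx' h'
    have heq : (I \ {y₀}) \ (B \ {y₀}) = I \ B := by
      ext z; simp only [mem_diff, mem_singleton_iff]
      constructor
      · rintro ⟨⟨hz, hz0⟩, hz'⟩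
        exact ⟨hz, fun hzB => hz' ⟨hzB, hz0⟩⟩
      · rintro ⟨hz, hzB⟩
        exact ⟨⟨hz, fun h0 => hzB (h0 ▸ hy₀)⟩, fun hh => hzB hh.1⟩
    rwa [heq] at this

/-- set of first components of a list of pairs -/
def pfst (L : List (α × α)) : Set α := {a | ∃ p ∈ L, p.1 = a}
/-- set of second components of a list of pairs -/
def psnd (L : List (α × α)) : Set α := {a | ∃ p ∈ L, p.2 = a}

@[simp] lemma pfst_nil : pfst ([] : List (α × α)) = ∅ := by simp [pfst]
@[simp] lemma psnd_nil : psnd ([] : List (α × α)) = ∅ := by simp [psnd]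
@[simp] lemma pfst_cons (p : α × α) (L : List (α × α)) :
    pfst (p :: L) = insert p.1 (pfst L) := by
  ext a
  simp only [pfst, List.mem_cons, mem_setOf_eq, mem_insert_iff]
  constructor
  · rintro ⟨q, (rfl | hq), rfl⟩
    · exact Or.inl rfl
    · exact Or.inr ⟨q, hq, rfl⟩
  · rintro (rfl | ⟨q, hq, rfl⟩)
    · exact ⟨p, Or.inl rfl, rfl⟩
    · exact ⟨q, Or.inr hq, rfl⟩
@[simp] lemma psnd_cons (p : α × α) (L : List (α × α)) :
    psnd (p :: L) = insert p.2 (psnd L) := by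
  ext a
  simp only [psnd, List.mem_cons, mem_setOf_eq, mem_insert_iff]
  constructor
  · rintro ⟨q, (rfl | hq), rfl⟩
    · exact Or.inl rfl
    · exact Or.inr ⟨q, hq, rfl⟩
  · rintro (rfl | ⟨q, hq, rfl⟩)
    · exact ⟨p, Or.inl rfl, rfl⟩
    · exact ⟨q, Or.inr hq, rfl⟩

/-- Triangular exchange lemma. The list is in *reverse path order*: the head pair is the
last exchange on the path; triangularity says that for `p` before `q` in the list,
`q.1 ∈ cl (I - p.2)`. -/
lemma tri [M.Finite] :
    ∀ (L : List (α × α)) (I : Set α), M.Indep I →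
    (L.map Prod.fst).Nodup → (L.map Prod.snd).Nodup →
    (∀ p ∈ L, p.1 ∉ I ∧ p.2 ∈ I ∧ p.1 ∈ M.closure I ∧ p.1 ∉ M.closure (I \ {p.2})) →
    L.Pairwise (fun p q => q.1 ∈ M.closure (I \ {p.2})) →
    M.Indep ((I \ psnd L) ∪ pfst L) ∧ M.closure ((I \ psnd L) ∪ pfst L) = M.closure I := by
  intro L
  induction L with
  | nil =>
    intro I hI _ _ _ _
    rw [pfst_nil, psnd_nil, diff_empty, union_empty]
    exact ⟨hI, rfl⟩
  | cons p rest ih =>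
    intro I hI hnf hns hcond hpw
    obtain ⟨hp1I, hp2I, hp1cl, hp1ncl⟩ := hcond p (List.mem_cons_self)
    have hp1E : p.1 ∈ M.E := Matroid.mem_ground_of_mem_closure hp1cl
    have hIdiff : M.Indep (I \ {p.2}) := hI.subset diff_subset
    have hp1nd : p.1 ∉ I \ {p.2} := fun h => hp1I h.1
    set I' := insert p.1 (I \ {p.2}) with hI'def
    have hI'i : M.Indep I' := by
      rw [hIdiff.insert_indep_iff_of_notMem hp1nd]; exact ⟨hp1E, hp1ncl⟩
    have hinsp2 : insert p.2 (I \ {p.2}) = I := by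
      rw [insert_diff_singleton]; exact insert_eq_of_mem hp2I
    have hclI' : M.closure I' = M.closure I := by
      apply subset_antisymm
      · apply Matroid.closure_subset_closure_of_subset_closure
        exact insert_subset hp1cl (fun z hz => M.subset_closure I hI.subset_ground hz.1)
      · apply Matroid.closure_subset_closure_of_subset_closure
        intro z hz
        by_cases hz2 : z = p.2
        · subst hz2
          exact Matroid.mem_closure_insert hp1ncl (by rw [hinsp2]; exact hp1cl)
        · exact M.mem_closure_of_mem (Or.inr ⟨hz, hz2⟩) hI'i.subset_ground
    have hp1nf : p.1 ∉ (rest.map Prod.fst) := (List.nodup_cons.mp hnf).1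
    have hp2ns : p.2 ∉ (rest.map Prod.snd) := (List.nodup_cons.mp hns).1
    have hpwhead : ∀ q ∈ rest, q.1 ∈ M.closure (I \ {p.2}) :=
      (List.pairwise_cons.mp hpw).1
    have hpwrest := (List.pairwise_cons.mp hpw).2
    -- conditions for rest over I'
    have hcond' : ∀ q ∈ rest, q.1 ∉ I' ∧ q.2 ∈ I' ∧ q.1 ∈ M.closure I' ∧
        q.1 ∉ M.closure (I' \ {q.2}) := by
      intro q hq
      obtain ⟨hq1I, hq2I, hq1cl, hq1ncl⟩ := hcond q (List.mem_cons_of_mem p hq)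
      have hq1p1 : q.1 ≠ p.1 := by
        intro h; exact hp1nf (h ▸ List.mem_map_of_mem (f := Prod.fst) hq)
      have hq2p2 : q.2 ≠ p.2 := by
        intro h; exact hp2ns (h ▸ List.mem_map_of_mem (f := Prod.snd) hq)
      refine ⟨?_, Or.inr ⟨hq2I, hq2p2⟩, hclI'.symm ▸ hq1cl, ?_⟩
      · rintro (h | h)
        · exact hq1p1 h
        · exact hq1I h.1
      · intro hcon
        have hq2I' : q.2 ∈ I' := Or.inr ⟨hq2I, hq2p2⟩
        have hp1I' : p.1 ∈ I' := Or.inl rfl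
        have hIp1 : I' \ {p.1} = I \ {p.2} := by
          rw [hI'def, insert_diff_self_of_notMem hp1nd]
        have h2 : q.1 ∈ M.closure (I' \ {p.1}) := by rw [hIp1]; exact hpwhead q hq
        have := mem_closure_diff_pair hI'i hq2I' hp1I' hcon h2
        have hsub : I' \ {q.2, p.1} ⊆ I \ {q.2} := by
          rintro z ⟨hz, hz'⟩
          simp only [mem_insert_iff, mem_singleton_iff, not_or] at hz'
          rcases hz with rfl | ⟨hzI, _⟩
          · exact absurd rfl hz'.2
          · exact ⟨hzI, hz'.1⟩
        exact hq1ncl ((M.closure_subset_closure hsub) this)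
    have hpw' : rest.Pairwise (fun p' q => q.1 ∈ M.closure (I' \ {p'.2})) := by
      refine List.Pairwise.imp_of_mem ?_ hpwrest
      intro a b ha hb hR
      have hb2 : b.1 ∈ M.closure (I \ {p.2}) := hpwhead b hb
      have ha2I : a.2 ∈ I := (hcond a (List.mem_cons_of_mem p ha)).2.1
      have := mem_closure_diff_pair hI ha2I hp2I hR hb2
      refine (M.closure_subset_closure ?_) this
      rintro z ⟨hz, hz'⟩
      simp only [mem_insert_iff, mem_singleton_iff, not_or] at hz'
      exact ⟨Or.inr ⟨hz, hz'.2⟩, hz'.1⟩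
    have hnf' : (rest.map Prod.fst).Nodup := (List.nodup_cons.mp hnf).2
    have hns' : (rest.map Prod.snd).Nodup := (List.nodup_cons.mp hns).2
    obtain ⟨hind, hcl⟩ := ih I' hI'i hnf' hns' hcond' hpw'
    have hsndI : psnd rest ⊆ I := by
      rintro a ⟨q, hq, rfl⟩
      exact (hcond q (List.mem_cons_of_mem p hq)).2.1
    have hseteq : (I' \ psnd rest) ∪ pfst rest = (I \ psnd (p :: rest)) ∪ pfst (p :: rest) := by
      rw [psnd_cons, pfst_cons]
      have hp1ns : p.1 ∉ psnd rest := fun h => hp1I (hsndI h)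
      ext z
      simp only [hI'def, mem_union, mem_diff, mem_insert_iff, mem_singleton_iff]
      constructor
      · rintro (⟨(rfl | ⟨hzI, hz2⟩), hzs⟩ | hzf)
        · exact Or.inr (Or.inl rfl)
        · exact Or.inl ⟨hzI, by tauto⟩
        · exact Or.inr (Or.inr hzf)
      · rintro (⟨hzI, hzns⟩ | (rfl | hzf))
        · exact Or.inl ⟨Or.inr ⟨hzI, by tauto⟩, by tauto⟩
        · exact Or.inl ⟨Or.inl rfl, hp1ns⟩
        · exact Or.inr hzf
    rw [hseteq] at hind hcl
    exact ⟨hind, hcl.trans hclI'⟩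

variable (M) in
/-- `u` can replace `v` in `I i` for some `i`. -/
def Arc {k : ℕ} (A I : Fin k → Set α) (u v : α) : Prop :=
  ∃ i, v ∈ I i ∧ u ∈ A i ∧ u ∉ I i ∧ u ∈ M.closure (I i) ∧ u ∉ M.closure (I i \ {v})

variable (M) in
def Term {k : ℕ} (A I : Fin k → Set α) (u : α) : Prop :=
  ∃ i, u ∈ A i ∧ u ∉ M.closure (I i)

variable (M) in
def IsPath {k : ℕ} (A I : Fin k → Set α) (n : ℕ) (f : ℕ → α) : Prop :=
  (f 0 ∉ ⋃ j, I j) ∧ (∀ l < n, Arc M A I (f l) (f (l+1))) ∧ Term M A I (f n)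

lemma caseB [M.Finite] {k : ℕ} (A I : Fin k → Set α) (hIi : ∀ i, M.Indep (I i))
    (hno : ¬ ∃ n f, IsPath M A I n f) :
    ∃ Y, Y ⊆ (⋃ j, I j) ∧ ∀ i, A i \ Y ⊆ M.closure (I i \ Y) := by
  classical
  set IU := ⋃ j, I j with hIU
  set Z : Set α := {u | ∃ (n : ℕ) (f : ℕ → α),
      f 0 ∉ IU ∧ (∀ l < n, Arc M A I (f l) (f (l+1))) ∧ f n = u} with hZ
  set Y := IU \ Z with hY
  refine ⟨Y, diff_subset, ?_⟩
  rintro i w ⟨hwA, hwY⟩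
  by_cases hwI : w ∈ I i
  · exact M.subset_closure _ (((hIi i).subset diff_subset).subset_ground) ⟨hwI, hwY⟩
  · have hwZ : w ∈ Z := by
      by_cases hwIU : w ∈ IU
      · by_contra h; exact hwY ⟨hwIU, h⟩
      · exact ⟨0, fun _ => w, hwIU, by omega, rfl⟩
    have hnterm : ¬ Term M A I w := by
      intro ht
      obtain ⟨n, f, h0, harc, hfn⟩ := hwZ
      exact hno ⟨n, f, h0, harc, hfn ▸ ht⟩
    have hwcl : w ∈ M.closure (I i) := by
      by_contra h; exact hnterm ⟨i, hwA, h⟩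
    by_contra hwncl
    have hsubIU : I i ⊆ IU := subset_iUnion I i
    have hIY : I i \ (I i \ Z) = I i \ Y := by
      ext z
      simp only [mem_diff, not_and, not_not, hY]
      constructor
      · rintro ⟨hz, hz'⟩
        exact ⟨hz, fun _ => hz' hz⟩
      · rintro ⟨hz, hz'⟩
        exact ⟨hz, fun _ => hz' (hsubIU hz)⟩
    have hall : ¬ ∀ v ∈ I i \ Z, w ∈ M.closure (I i \ {v}) := by
      intro hall
      have := mem_closure_diff_set (I i \ Z).ncard (I i) (I i \ Z) (hIi i) diff_subset rfl
        hwcl hall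
      rw [hIY] at this
      exact hwncl this
    push_neg at hall
    obtain ⟨v, hvB, hvn⟩ := hall
    have harcwv : Arc M A I w v := ⟨i, hvB.1, hwA, hwI, hwcl, hvn⟩
    obtain ⟨n, f, h0, harcs, hfn⟩ := hwZ
    have hvZ : v ∈ Z := by
      refine ⟨n+1, Function.update f (n+1) v,
        by rw [Function.update_of_ne (by omega)]; exact h0, ?_,
        by rw [Function.update_self]⟩
      intro l hl
      rcases Nat.lt_or_ge l n with h | h
      · rw [Function.update_of_ne (by omega), Function.update_of_ne (by omega)]
        exact harcs l h
      · have hln : l = n := by omega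
        subst hln
        rw [Function.update_of_ne (by omega), Function.update_self, hfn]
        exact harcwv
    exact hvB.2 hvZ

lemma ncard_le_sum {α ι : Type*} [Fintype ι] (S : ι → Set α) (hf : ∀ i, (S i).Finite)
    (Y : Set α) (hY : Y ⊆ ⋃ i, S i) : Y.ncard ≤ ∑ i, (S i).ncard := by
  classical
  have haux : ∀ s : Finset ι, (⋃ i ∈ s, S i).ncard ≤ ∑ i ∈ s, (S i).ncard := by
    intro s
    induction s using Finset.induction with
    | empty => simp
    | @insert a s ha ih =>
      rw [Finset.set_biUnion_insert, Finset.sum_insert ha]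
      exact le_trans (ncard_union_le _ _) (add_le_add le_rfl ih)
  have h1 : Y.ncard ≤ (⋃ i ∈ (Finset.univ : Finset ι), S i).ncard := by
    apply ncard_le_ncard
    · intro y hy
      obtain ⟨s, ⟨i, rfl⟩, hys⟩ := hY hy
      exact mem_iUnion.mpr ⟨i, by simpa using hys⟩
    · exact Set.Finite.biUnion (Finset.finite_toSet _) (fun i _ => hf i)
  exact le_trans h1 (haux Finset.univ)

lemma counting [M.Finite] {k m : ℕ} (A I : Fin k → Set α)
    (hR : ∀ F A' : Set α, M.IsFlat F → M.IsFlat A' → F ⊆ A' → m ≤ mrk M A' →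
      k * (mrk M A' - mrk M F) ≤ (A' \ F).ncard)
    (hA : ∀ i, M.IsFlat (A i)) (hAm : ∀ i, m ≤ mrk M (A i))
    (hIi : ∀ i, M.Indep (I i)) (hk : 0 < k)
    (Y : Set α) (hYsub : Y ⊆ ⋃ j, I j) (hcert : ∀ i, A i \ Y ⊆ M.closure (I i \ Y)) :
    ∑ i, mrk M (A i) ≤ ∑ i, (I i).ncard := by
  classical
  set F : Fin k → Set α := fun i => M.closure (I i \ Y) ∩ A i with hF
  have hYfin : Y.Finite := M.set_finite Y (hYsub.trans (iUnion_subset (fun i => (hIi i).subset_ground)))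
  have hFA : ∀ i, F i ⊆ A i := fun i => inter_subset_right
  have hFflat : ∀ i, M.IsFlat (F i) := fun i => flat_inter (flat_closure M _) (hA i)
  have hdiffY : ∀ i, A i \ F i ⊆ Y := by
    intro i z hz
    by_contra hzY
    exact hz.2 ⟨hcert i ⟨hz.1, hzY⟩, hz.1⟩
  have hFrk : ∀ i, mrk M (F i) ≤ (I i \ Y).ncard := fun i =>
    mrk_le_ncard_of_subset_closure ((hIi i).subset diff_subset) inter_subset_left
  have hFA' : ∀ i, mrk M (F i) ≤ mrk M (A i) := fun i => mrk_mono (hFA i)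
  -- main rank-deficiency bound
  have hsum1 : k * ∑ i, (mrk M (A i) - mrk M (F i)) ≤ k * Y.ncard := by
    rw [Finset.mul_sum]
    calc ∑ i, k * (mrk M (A i) - mrk M (F i))
        ≤ ∑ i : Fin k, Y.ncard := by
          refine Finset.sum_le_sum (fun i _ => ?_)
          exact le_trans (hR (F i) (A i) (hFflat i) (hA i) (hFA i) (hAm i))
            (ncard_le_ncard (hdiffY i) hYfin)
      _ = k * Y.ncard := by simp [Finset.sum_const, mul_comm]
  have hsum2 : ∑ i, (mrk M (A i) - mrk M (F i)) ≤ Y.ncard :=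
    Nat.le_of_mul_le_mul_left hsum1 hk
  have hYcard : Y.ncard ≤ ∑ i, (I i ∩ Y).ncard := by
    refine ncard_le_sum _ (fun i => (M.set_finite _ (((inter_subset_left).trans (hIi i).subset_ground)))) Y ?_
    intro y hy
    obtain ⟨s, ⟨i, rfl⟩, hys⟩ := hYsub hy
    exact mem_iUnion.mpr ⟨i, hys, hy⟩
  calc ∑ i, mrk M (A i)
      = ∑ i, (mrk M (F i) + (mrk M (A i) - mrk M (F i))) := by
        refine Finset.sum_congr rfl (fun i _ => ?_)
        exact (Nat.add_sub_cancel' (hFA' i)).symm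
    _ = (∑ i, mrk M (F i)) + ∑ i, (mrk M (A i) - mrk M (F i)) := Finset.sum_add_distrib
    _ ≤ (∑ i, (I i \ Y).ncard) + Y.ncard :=
        add_le_add (Finset.sum_le_sum (fun i _ => hFrk i)) hsum2
    _ ≤ (∑ i, (I i \ Y).ncard) + ∑ i, (I i ∩ Y).ncard := by
        exact add_le_add_right hYcard _
    _ = ∑ i, ((I i ∩ Y).ncard + (I i \ Y).ncard) := by
        rw [← Finset.sum_add_distrib]
        exact Finset.sum_congr rfl (fun i _ => by rw [add_comm])
    _ = ∑ i, (I i).ncard := by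
        refine Finset.sum_congr rfl (fun i _ => ?_)
        exact ncard_inter_add_ncard_diff_eq_ncard (I i) Y (M.set_finite _ (hIi i).subset_ground)

lemma caseA [M.Finite] {k : ℕ} (A I : Fin k → Set α)
    (hAE : ∀ i, A i ⊆ M.E)
    (hIi : ∀ i, M.Indep (I i)) (hIA : ∀ i, I i ⊆ A i)
    (hdisj : Pairwise (Function.onFun Disjoint I))
    (hpath : ∃ n f, IsPath M A I n f) :
    ∃ J : Fin k → Set α, (∀ i, M.Indep (J i)) ∧ (∀ i, J i ⊆ A i) ∧
      Pairwise (Function.onFun Disjoint J) ∧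
      ∑ i, (J i).ncard = (∑ i, (I i).ncard) + 1 := by
  classical
  set P := {n | ∃ f, IsPath M A I n f} with hP
  have hPne : P.Nonempty := by obtain ⟨n, f, hf⟩ := hpath; exact ⟨n, f, hf⟩
  set n := sInf P with hn
  obtain ⟨f, h0, harc, hterm⟩ : ∃ f, IsPath M A I n f := Nat.sInf_mem hPne
  have hmin : ∀ m, m < n → ¬ ∃ f', IsPath M A I m f' := fun m hm =>
    Nat.notMem_of_lt_sInf hm
  have hfin : ∀ (X : Set α), X ⊆ M.E → X.Finite := fun X h => M.set_finite X h
  have huniqI : ∀ (i j : Fin k) x, x ∈ I i → x ∈ I j → i = j := by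
    intro i j x hxi hxj
    by_contra hne
    exact Set.disjoint_left.mp (hdisj hne) hxi hxj
  -- splicing out a segment gives a shorter path
  have hsplice : ∀ a d, 1 ≤ d → a + 1 + d ≤ n → Arc M A I (f a) (f (a+1+d)) → False := by
    intro a d hd hle harc'
    refine hmin (n - d) (by omega) ⟨fun l => if l ≤ a then f l else f (l + d), ?_, ?_, ?_⟩
    · show (if 0 ≤ a then f 0 else f (0 + d)) ∉ ⋃ j, I j
      rw [if_pos (Nat.zero_le a)]; exact h0
    · intro l hl
      show Arc M A I (if l ≤ a then f l else f (l + d))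
        (if l + 1 ≤ a then f (l+1) else f (l + 1 + d))
      rcases lt_trichotomy l a with h | h | h
      · rw [if_pos h.le, if_pos (by omega)]
        exact harc l (by omega)
      · subst h
        rw [if_pos le_rfl, if_neg (by omega)]
        exact harc'
      · rw [if_neg (by omega), if_neg (by omega)]
        have e : l + 1 + d = (l + d) + 1 := by omega
        rw [e]
        exact harc (l + d) (by omega)
    · show Term M A I (if n - d ≤ a then f (n - d) else f (n - d + d))
      rw [if_neg (by omega), (by omega : n - d + d = n)]
      exact hterm
  have hdup : ∀ a b, a < b → b ≤ n → f a = f b → False := by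
    intro a b hab hbn heq
    rcases Nat.eq_or_lt_of_le hbn with hbn' | hbn'
    · subst hbn'
      exact hmin a (by omega) ⟨f, h0, fun l hl => harc l (by omega), by rw [heq]; exact hterm⟩
    · refine hsplice a (b - a) (by omega) (by omega) ?_
      have e : a + 1 + (b - a) = b + 1 := by omega
      rw [e, heq]
      exact harc b hbn'
  have hns : ∀ a c, a + 1 < c → c ≤ n → Arc M A I (f a) (f c) → False := by
    intro a c hac hcn harc'
    refine hsplice a (c - a - 1) (by omega) (by omega) ?_
    have e : a + 1 + (c - a - 1) = c := by omega
    rw [e]; exact harc'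
  obtain ⟨istar, hstarA, hstarcl⟩ := hterm
  -- choose for each arc on the path a witnessing index
  set g : ℕ → Fin k := fun l => if hl : l < n then (harc l hl).choose else istar with hgdef
  have hg : ∀ l, l < n → (f (l+1) ∈ I (g l) ∧ f l ∈ A (g l) ∧ f l ∉ I (g l) ∧
      f l ∈ M.closure (I (g l)) ∧ f l ∉ M.closure (I (g l) \ {f (l+1)})) := by
    intro l hl
    have hgl : g l = (harc l hl).choose := by simp only [hgdef]; rw [dif_pos hl]
    rw [hgl]
    exact (harc l hl).choose_spec
  set Lam : Fin k → List ℕ := fun i => ((List.range n).filter (fun l => g l = i)).reverse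
    with hLam
  set L : Fin k → List (α × α) := fun i => (Lam i).map (fun l => (f l, f (l+1))) with hL
  have hmemLam : ∀ i l, l ∈ Lam i ↔ l < n ∧ g l = i := by
    intro i l
    simp [hLam, List.mem_reverse, List.mem_filter, List.mem_range, decide_eq_true_eq]
  have hpfst : ∀ i, pfst (L i) = f '' {l | l < n ∧ g l = i} := by
    intro i
    ext a
    simp only [pfst, hL, List.mem_map, mem_setOf_eq, mem_image]
    constructor
    · rintro ⟨p, ⟨l, hl, rfl⟩, rfl⟩
      exact ⟨l, (hmemLam i l).mp hl, rfl⟩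
    · rintro ⟨l, hl, rfl⟩
      exact ⟨(f l, f (l+1)), ⟨l, (hmemLam i l).mpr hl, rfl⟩, rfl⟩
  have hpsnd : ∀ i, psnd (L i) = (fun l => f (l+1)) '' {l | l < n ∧ g l = i} := by
    intro i
    ext a
    simp only [psnd, hL, List.mem_map, mem_setOf_eq, mem_image]
    constructor
    · rintro ⟨p, ⟨l, hl, rfl⟩, rfl⟩
      exact ⟨l, (hmemLam i l).mp hl, rfl⟩
    · rintro ⟨l, hl, rfl⟩
      exact ⟨(f l, f (l+1)), ⟨l, (hmemLam i l).mpr hl, rfl⟩, rfl⟩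
  have hLamnodup : ∀ i, (Lam i).Nodup := by
    intro i
    simp only [hLam]
    rw [List.nodup_reverse]
    exact List.Nodup.filter _ (List.nodup_range)
  have hfstnodup : ∀ i, ((L i).map Prod.fst).Nodup := by
    intro i
    simp only [hL]
    rw [List.map_map]
    refine List.Nodup.map_on ?_ (hLamnodup i)
    intro x hx y hy hxy
    have hxn := ((hmemLam i x).mp hx).1
    have hyn := ((hmemLam i y).mp hy).1
    by_contra hne
    rcases Nat.lt_or_ge x y with h | h
    · exact hdup x y h hyn.le hxy
    · exact hdup y x (by omega) hxn.le hxy.symm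
  have hsndnodup : ∀ i, ((L i).map Prod.snd).Nodup := by
    intro i
    simp only [hL]
    rw [List.map_map]
    refine List.Nodup.map_on ?_ (hLamnodup i)
    intro x hx y hy hxy
    have hxn := ((hmemLam i x).mp hx).1
    have hyn := ((hmemLam i y).mp hy).1
    simp only [Function.comp] at hxy
    by_contra hne
    rcases Nat.lt_or_ge x y with h | h
    · exact hdup (x+1) (y+1) (by omega) (by omega) hxy
    · exact hdup (y+1) (x+1) (by omega) (by omega) hxy.symm
  have hcond : ∀ i, ∀ p ∈ L i, p.1 ∉ I i ∧ p.2 ∈ I i ∧ p.1 ∈ M.closure (I i) ∧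
      p.1 ∉ M.closure (I i \ {p.2}) := by
    intro i p hp
    simp only [hL, List.mem_map] at hp
    obtain ⟨l, hl, rfl⟩ := hp
    obtain ⟨hln, hgl⟩ := (hmemLam i l).mp hl
    obtain ⟨h1, h2, h3, h4, h5⟩ := hg l hln
    rw [← hgl]
    exact ⟨h3, h1, h4, h5⟩
  have hpair : ∀ i, (L i).Pairwise (fun p q => q.1 ∈ M.closure (I i \ {p.2})) := by
    intro i
    simp only [hL, hLam]
    rw [List.pairwise_map, List.pairwise_reverse]
    refine List.Pairwise.imp_of_mem ?_
      ((List.pairwise_lt_range).sublist List.filter_sublist)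
    intro a b ha hb hab
    have hamem := (hmemLam i a).mp (by simp only [hLam]; rw [List.mem_reverse]; exact ha)
    have hbmem := (hmemLam i b).mp (by simp only [hLam]; rw [List.mem_reverse]; exact hb)
    obtain ⟨han, hga⟩ := hamem
    obtain ⟨hbn, hgb⟩ := hbmem
    show f a ∈ M.closure (I i \ {f (b+1)})
    by_contra hcon
    refine hns a (b+1) (by omega) (by omega) ?_
    exact ⟨i, hgb ▸ (hg b hbn).1, hga ▸ (hg a han).2.1, hga ▸ (hg a han).2.2.1,
      hga ▸ (hg a han).2.2.2.1, hcon⟩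
  have htri := fun i => tri (L i) (I i) (hIi i) (hfstnodup i) (hsndnodup i) (hcond i) (hpair i)
  set K : Fin k → Set α := fun i => (I i \ psnd (L i)) ∪ pfst (L i) with hKdef
  have hKset : ∀ i, K i = (I i \ psnd (L i)) ∪ pfst (L i) := fun i => rfl
  have hKind : ∀ i, M.Indep (K i) := fun i => (htri i).1
  have hKcl : ∀ i, M.closure (K i) = M.closure (I i) := fun i => (htri i).2
  have hKA : ∀ i, K i ⊆ A i := by
    intro i x hx
    rw [hKset i, mem_union] at hx
    rcases hx with h | h
    · exact hIA i h.1
    · rw [hpfst i] at h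
      obtain ⟨l, ⟨hln, hgl⟩, rfl⟩ := h
      rw [← hgl]; exact (hg l hln).2.1
  set J : Fin k → Set α := fun i => if i = istar then insert (f n) (K i) else K i with hJdef
  have hJset : ∀ i, J i = if i = istar then insert (f n) (K i) else K i := fun i => rfl
  have hfnE : f n ∈ M.E := hAE istar hstarA
  have hfnKstar : f n ∉ K istar := by
    intro h
    have : f n ∈ M.closure (K istar) :=
      M.subset_closure _ ((hKA istar).trans (hAE istar)) h
    rw [hKcl istar] at this
    exact hstarcl this
  have hJind : ∀ i, M.Indep (J i) := by
    intro i
    rw [hJset i]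
    by_cases hi : i = istar
    · rw [if_pos hi]; subst hi
      refine ((hKind i).insert_indep_iff_of_notMem hfnKstar).mpr ⟨hfnE, ?_⟩
      rw [hKcl i]; exact hstarcl
    · rw [if_neg hi]; exact hKind i
  have hJA : ∀ i, J i ⊆ A i := by
    intro i
    rw [hJset i]
    by_cases hi : i = istar
    · rw [if_pos hi]
      exact insert_subset (by rw [hi]; exact hstarA) (hKA i)
    · rw [if_neg hi]; exact hKA i
  -- membership decomposition
  have hdec : ∀ i x, x ∈ J i → (x ∈ I i ∧ x ∉ psnd (L i)) ∨
      (∃ l, l < n ∧ g l = i ∧ f l = x) ∨ (i = istar ∧ x = f n) := by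
    intro i x hx
    rw [hJset i] at hx
    have hKcase : x ∈ K i → (x ∈ I i ∧ x ∉ psnd (L i)) ∨
        (∃ l, l < n ∧ g l = i ∧ f l = x) := by
      intro h
      rw [hKset i, mem_union] at h
      rcases h with h | h
      · exact Or.inl ⟨h.1, h.2⟩
      · rw [hpfst i] at h
        obtain ⟨l, ⟨hln, hgl⟩, rfl⟩ := h
        exact Or.inr ⟨l, hln, hgl, rfl⟩
    by_cases hi : i = istar
    · rw [if_pos hi] at hx
      rcases mem_insert_iff.mp hx with rfl | hx'
      · exact Or.inr (Or.inr ⟨hi, rfl⟩)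
      · rcases hKcase hx' with h | h
        · exact Or.inl h
        · exact Or.inr (Or.inl h)
    · rw [if_neg hi] at hx
      rcases hKcase hx with h | h
      · exact Or.inl h
      · exact Or.inr (Or.inl h)
  have hIpath : ∀ i x, x ∈ I i → x ∉ psnd (L i) → ∀ l, l ≤ n → f l = x → False := by
    intro i x hxI hxns l hln hfl
    rcases Nat.eq_zero_or_pos l with rfl | hl0
    · apply h0
      rw [hfl]
      exact mem_iUnion.mpr ⟨i, hxI⟩
    · have hl1 : l - 1 < n := by omega
      have hx1 : x ∈ I (g (l-1)) := by
        have h1 := (hg (l-1) hl1).1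
        rwa [(by omega : l - 1 + 1 = l), hfl] at h1
      have hgi : g (l-1) = i := huniqI _ i x hx1 hxI
      apply hxns
      rw [hpsnd i]
      refine ⟨l-1, ⟨hl1, hgi⟩, ?_⟩
      show f (l - 1 + 1) = x
      rw [(by omega : l - 1 + 1 = l)]
      exact hfl
  have huniqJ : ∀ i j x, x ∈ J i → x ∈ J j → i = j := by
    intro i j x hxi hxj
    rcases hdec i x hxi with hA1 | hB1 | hC1 <;> rcases hdec j x hxj with hA2 | hB2 | hC2
    · exact huniqI i j x hA1.1 hA2.1
    · obtain ⟨l, hln, hgl, hfl⟩ := hB2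
      exact (hIpath i x hA1.1 hA1.2 l hln.le hfl).elim
    · exact (hIpath i x hA1.1 hA1.2 n le_rfl hC2.2.symm).elim
    · obtain ⟨l, hln, hgl, hfl⟩ := hB1
      exact (hIpath j x hA2.1 hA2.2 l hln.le hfl).elim
    · obtain ⟨l, hln, hgl, hfl⟩ := hB1
      obtain ⟨l', hln', hgl', hfl'⟩ := hB2
      have hll : l = l' := by
        by_contra hne
        rcases Nat.lt_or_ge l l' with h | h
        · exact hdup l l' h hln'.le (by rw [hfl, hfl'])
        · exact hdup l' l (by omega) hln.le (by rw [hfl', hfl])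
      rw [← hgl, ← hgl', hll]
    · obtain ⟨l, hln, hgl, hfl⟩ := hB1
      exact (hdup l n hln le_rfl (by rw [hfl, hC2.2])).elim
    · exact (hIpath j x hA2.1 hA2.2 n le_rfl hC1.2.symm).elim
    · obtain ⟨l, hln, hgl, hfl⟩ := hB2
      exact (hdup l n hln le_rfl (by rw [hfl, hC1.2])).elim
    · rw [hC1.1, hC2.1]
  have hJdisj : Pairwise (Function.onFun Disjoint J) := by
    intro i j hne
    rw [Function.onFun, Set.disjoint_left]
    intro x hxi hxj
    exact hne (huniqJ i j x hxi hxj)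
  -- cardinalities
  have hKcard : ∀ i, (K i).ncard = (I i).ncard := by
    intro i
    have hps : psnd (L i) ⊆ I i := by
      rw [hpsnd i]
      rintro a ⟨l, ⟨hln, hgl⟩, rfl⟩
      rw [← hgl]; exact (hg l hln).1
    have hIfin : (I i).Finite := hfin (I i) (hIi i).subset_ground
    have hpfE : pfst (L i) ⊆ M.E := by
      refine subset_trans ?_ ((hKA i).trans (hAE i))
      rw [hKset i]; exact subset_union_right
    have hdisj2 : Disjoint (I i \ psnd (L i)) (pfst (L i)) := by
      rw [Set.disjoint_right]
      intro a ha
      rw [hpfst i] at ha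
      obtain ⟨l, ⟨hln, hgl⟩, rfl⟩ := ha
      intro hcon
      exact (hg l hln).2.2.1 (by rw [hgl]; exact hcon.1)
    have hfcard : (pfst (L i)).ncard = {l | l < n ∧ g l = i}.ncard := by
      rw [hpfst i]
      refine ncard_image_of_injOn ?_
      intro a ha b hb hab
      by_contra hne
      rcases Nat.lt_or_ge a b with h | h
      · exact hdup a b h hb.1.le hab
      · exact hdup b a (by omega) ha.1.le hab.symm
    have hscard : (psnd (L i)).ncard = {l | l < n ∧ g l = i}.ncard := by
      rw [hpsnd i]
      refine ncard_image_of_injOn ?_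
      intro a ha b hb hab
      have han := ha.1
      have hbn := hb.1
      have : a + 1 = b + 1 := by
        by_contra hne
        rcases Nat.lt_or_ge (a+1) (b+1) with h | h
        · exact hdup (a+1) (b+1) h (by omega) hab
        · exact hdup (b+1) (a+1) (by omega) (by omega) hab.symm
      omega
    have hdsum := ncard_diff_add_ncard_of_subset hps hIfin
    rw [hKset i, ncard_union_eq hdisj2 (hIfin.subset diff_subset) (hfin _ hpfE)]
    omega
  have hJcard : ∑ i, (J i).ncard = (∑ i, (I i).ncard) + 1 := by
    have hJc : ∀ i, (J i).ncard = (I i).ncard + (if i = istar then 1 else 0) := by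
      intro i
      rw [hJset i]
      by_cases hi : i = istar
      · rw [if_pos hi, if_pos hi]
        subst hi
        rw [ncard_insert_of_notMem hfnKstar (hfin _ ((hKA i).trans (hAE i))), hKcard i]
      · rw [if_neg hi, if_neg hi, hKcard i, add_zero]
    calc ∑ i, (J i).ncard
        = ∑ i, ((I i).ncard + if i = istar then 1 else 0) :=
          Finset.sum_congr rfl (fun i _ => hJc i)
      _ = (∑ i, (I i).ncard) + ∑ i, (if i = istar then 1 else 0) := Finset.sum_add_distrib
      _ = (∑ i, (I i).ncard) + 1 := by
          rw [Finset.sum_ite_eq' Finset.univ istar (fun _ => 1)]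
          simp
  exact ⟨J, hJind, hJA, hJdisj, hJcard⟩

lemma main_aux (M : Matroid α) [M.Finite] {k m : ℕ}
    (hR : ∀ F A' : Set α, M.IsFlat F → M.IsFlat A' → F ⊆ A' → m ≤ mrk M A' →
      k * (mrk M A' - mrk M F) ≤ (A' \ F).ncard)
    (A : Fin k → Set α) (hA : ∀ i, M.IsFlat (A i)) (hAm : ∀ i, m ≤ mrk M (A i)) :
    ∀ (d : ℕ) (I : Fin k → Set α), (∀ i, M.Indep (I i)) → (∀ i, I i ⊆ A i) →
      Pairwise (Function.onFun Disjoint I) →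
      (∑ i, mrk M (A i)) ≤ (∑ i, (I i).ncard) + d →
      ∃ B : Fin k → Set α, Pairwise (Function.onFun Disjoint B) ∧
        ∀ i, M.IsBasis (B i) (A i) := by
  have hAE : ∀ i, A i ⊆ M.E := fun i => (hA i).subset_ground
  intro d
  induction d with
  | zero =>
    intro I hIi hIA hdisj hle
    rw [add_zero] at hle
    have hper : ∀ i, (I i).ncard ≤ mrk M (A i) := fun i => ncard_le_mrk (hIi i) (hIA i)
    have heq : ∀ i, mrk M (A i) ≤ (I i).ncard := by
      intro i
      by_contra hlt
      push_neg at hlt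
      have := Finset.sum_lt_sum (fun j (_ : j ∈ Finset.univ) => hper j)
        ⟨i, Finset.mem_univ i, hlt⟩
      omega
    exact ⟨I, hdisj, fun i => basis_of_mrk_le (hIi i) (hIA i) (hAE i) (heq i)⟩
  | succ d ih =>
    intro I hIi hIA hdisj hle
    by_cases hd : (∑ i, mrk M (A i)) ≤ (∑ i, (I i).ncard) + d
    · exact ih I hIi hIA hdisj hd
    push_neg at hd
    have hk : 0 < k := by
      by_contra hk0
      push_neg at hk0
      have hk0' : k = 0 := by omega
      subst hk0'
      simp only [Finset.univ_eq_empty, Finset.sum_empty] at hd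
      omega
    by_cases hpath : ∃ n f, IsPath M A I n f
    · obtain ⟨J, hJi, hJA, hJdisj, hJcard⟩ := caseA A I hAE hIi hIA hdisj hpath
      exact ih J hJi hJA hJdisj (by omega)
    · obtain ⟨Y, hYsub, hcert⟩ := caseB A I hIi hpath
      have := counting A I hR hA hAm hIi hk Y hYsub hcert
      omega

end StmtAux

/-- Let `M` be a finite matroid satisfying `R(k,m)`: for any flats
`F ⊆ A` with `r(A) ≥ m`, `|A \ F| ≥ k·(r(A) − r(F))`. If `A₁,…,A_k` are flats with
`r(Aᵢ) ≥ m` for all `i`, then there are pairwise disjoint sets `Bᵢ ⊆ Aᵢ` such that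
`Bᵢ` is a basis of `Aᵢ` for every `i`. -/
theorem stmt8 {α : Type*} (M : Matroid α) [M.Finite] (k m : ℕ)
    (hR : ∀ F A : Set α, M.IsFlat F → M.IsFlat A → F ⊆ A → m ≤ mrk M A →
      k * (mrk M A - mrk M F) ≤ (A \ F).ncard)
    (A : Fin k → Set α) (hA : ∀ i, M.IsFlat (A i)) (hAm : ∀ i, m ≤ mrk M (A i)) :
    ∃ B : Fin k → Set α, Pairwise (Function.onFun Disjoint B) ∧
      ∀ i, M.IsBasis (B i) (A i) := by
  refine StmtAux.main_aux M hR A hA hAm (∑ i, mrk M (A i)) (fun _ => ∅)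
    (fun _ => M.empty_indep) (fun _ => Set.empty_subset _) ?_ (by simp)
  intro i j _
  simp [Function.onFun]
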